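/- Fix q ∈ ℝ, ω_k > 0, ω > 0 and z₀ ∈ ℂ, and let k := p(ω_k, z₀). Then for every z ≠ z₀, (q·ω/(4π)) · η(k, ε̄(z)) / η(k, p(ω,z)) = (q/(4π√2)) · (1 + z₀·conj z)/(z − z₀). (This is the paper's identity (4.20) expressing the electromagnetic memory Green's function in the Weinberg soft-photon form q ω k^μ ε̄_μ / (k · p); in particular the left-hand side is independent of ω and of ω_k.) -/

import Mathlib

noncomputable section

def eta (u v : Fin 4 → ℂ) : ℂ := -(u 0 * v 0) + u 1 * v 1 + u 2 * v 2 + u 3 * v 3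

def pmom (ω : ℝ) (z : ℂ) : Fin 4 → ℂ := fun i =>
  (ω : ℂ) * ![1,
    (z + (starRingEnd ℂ) z) / (1 + ((‖z‖ : ℝ) : ℂ) ^ 2),
    -Complex.I * (z - (starRingEnd ℂ) z) / (1 + ((‖z‖ : ℝ) : ℂ) ^ 2),
    (1 - ((‖z‖ : ℝ) : ℂ) ^ 2) / (1 + ((‖z‖ : ℝ) : ℂ) ^ 2)] i

def Pconf (z : ℂ) : ℝ := (1 + ‖z‖ ^ 2) / Real.sqrt 2

def epsPol (z : ℂ) : Fin 4 → ℂ := fun i =>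
  (1 / (2 * ((Pconf z : ℝ) : ℂ))) * ![0, 1 - z ^ 2, Complex.I * (1 + z ^ 2), -2 * z] i

def epsBarPol (z : ℂ) : Fin 4 → ℂ := fun i =>
  (1 / (2 * ((Pconf z : ℝ) : ℂ))) *
    ![0, 1 - ((starRingEnd ℂ) z) ^ 2, -Complex.I * (1 + ((starRingEnd ℂ) z) ^ 2),
      -2 * (starRingEnd ℂ) z] i

lemma abs_sq_eq (z : ℂ) : ((‖z‖ : ℝ) : ℂ)^2 = z * (starRingEnd ℂ) z := by
  rw [Complex.mul_conj, ← Complex.sq_norm]; push_cast; ring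

lemma one_add_ne (z : ℂ) : (1 : ℂ) + ((‖z‖ : ℝ) : ℂ)^2 ≠ 0 := by
  have h : (0:ℝ) < 1 + ‖z‖ ^ 2 := by positivity
  have : ((1 + ‖z‖ ^ 2 : ℝ):ℂ) ≠ 0 := by exact_mod_cast h.ne'
  push_cast at this
  exact this

lemma one_add_ne' (z : ℂ) : (1 : ℂ) + z * (starRingEnd ℂ) z ≠ 0 := by
  rw [← abs_sq_eq]; exact one_add_ne z

lemma sqrt2_sq : ((Real.sqrt 2 : ℝ) : ℂ)^2 = 2 := by
  rw [← Complex.ofReal_pow, Real.sq_sqrt (by norm_num : (0:ℝ) ≤ 2)]; norm_num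

lemma eta_pp (ωk ω : ℝ) (z₀ z : ℂ) :
    eta (pmom ωk z₀) (pmom ω z)
      = (ωk : ℂ) * ω * (-2 * (z - z₀) * ((starRingEnd ℂ) z - (starRingEnd ℂ) z₀))
        / ((1 + ((‖z₀‖ : ℝ) : ℂ)^2) * (1 + ((‖z‖ : ℝ) : ℂ)^2)) := by
  have h0 := one_add_ne' z₀
  have h1 := one_add_ne' z
  simp only [eta, pmom, Matrix.cons_val_zero, Matrix.cons_val_one, Matrix.head_cons,
    Matrix.cons_val_two, Matrix.cons_val_three, Matrix.tail_cons]
  rw [abs_sq_eq z, abs_sq_eq z₀]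
  field_simp
  ring_nf
  rw [Complex.I_sq]
  ring

lemma eta_pe (ωk : ℝ) (z₀ z : ℂ) :
    eta (pmom ωk z₀) (epsBarPol z)
      = (ωk : ℂ) * Real.sqrt 2 * (((starRingEnd ℂ) z₀ - (starRingEnd ℂ) z) * (1 + z₀ * (starRingEnd ℂ) z))
        / ((1 + ((‖z₀‖ : ℝ) : ℂ)^2) * (1 + ((‖z‖ : ℝ) : ℂ)^2)) := by
  have h0 := one_add_ne' z₀
  have h1 := one_add_ne' z
  have hs : ((Real.sqrt 2 : ℝ) : ℂ) ≠ 0 := by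
    have : Real.sqrt 2 ≠ 0 := by positivity
    exact_mod_cast this
  simp only [eta, pmom, epsBarPol, Pconf, Matrix.cons_val_zero, Matrix.cons_val_one,
    Matrix.head_cons, Matrix.cons_val_two, Matrix.cons_val_three, Matrix.tail_cons]
  push_cast
  rw [abs_sq_eq z, abs_sq_eq z₀]
  field_simp
  ring_nf
  rw [Complex.I_sq]
  ring

lemma div_div_cancelD (c a b D : ℂ) (hD : D ≠ 0) :
    (c * (a / D)) / (b / D) = c * a / b := by
  rcases eq_or_ne b 0 with rfl | hb
  · simp
  · field_simp

set_option maxHeartbeats 1000000 in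
/-- The paper's identity (4.20): the electromagnetic memory Green's function in
Weinberg soft-photon form. For `q ∈ ℝ`, `ω_k > 0`, `ω > 0`, `k := p(ω_k,z₀)`
and every `z ≠ z₀`,
`(qω/4π) η(k, ε̄(z))/η(k, p(ω,z)) = (q/(4π√2)) (1 + z₀z̄)/(z − z₀)`;
in particular the left-hand side is independent of `ω` and `ω_k`. -/
theorem memH_eq_weinberg_soft_photon_factor
    (q : ℝ) (ωk ω : ℝ) (hωk : 0 < ωk) (hω : 0 < ω) (z₀ : ℂ) (z : ℂ) (hz : z ≠ z₀) :
    ((q * ω / (4 * Real.pi) : ℝ) : ℂ) *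
        eta (pmom ωk z₀) (epsBarPol z) / eta (pmom ωk z₀) (pmom ω z)
      = ((q / (4 * Real.pi * Real.sqrt 2) : ℝ) : ℂ) *
          (1 + z₀ * (starRingEnd ℂ) z) / (z - z₀) := by
  have h0 := one_add_ne z₀
  have h1 := one_add_ne z
  have hzz : z - z₀ ≠ 0 := sub_ne_zero.mpr hz
  have hzzc : (starRingEnd ℂ) z - (starRingEnd ℂ) z₀ ≠ 0 :=
    sub_ne_zero.mpr (fun h => hz ((starRingEnd ℂ).injective h))
  have hωk' : (ωk : ℂ) ≠ 0 := by exact_mod_cast hωk.ne'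
  have hω' : (ω : ℂ) ≠ 0 := by exact_mod_cast hω.ne'
  have hπ : ((Real.pi : ℝ) : ℂ) ≠ 0 := by exact_mod_cast Real.pi_ne_zero
  have hs : ((Real.sqrt 2 : ℝ) : ℂ) ≠ 0 := by
    have : Real.sqrt 2 ≠ 0 := by positivity
    exact_mod_cast this
  have hL2 : (ωk : ℂ) * ω * (-2 * (z - z₀) * ((starRingEnd ℂ) z - (starRingEnd ℂ) z₀)) ≠ 0 := by
    apply mul_ne_zero (mul_ne_zero hωk' hω')
    apply mul_ne_zero (mul_ne_zero (by norm_num) hzz) hzzc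
  rw [eta_pp, eta_pe, div_div_cancelD _ _ _ _ (mul_ne_zero h0 h1),
    div_eq_div_iff hL2 hzz]
  push_cast
  field_simp
  ring_nf
  rw [sqrt2_sq]
  ring

end
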